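/- arXiv:2312.03593 — 3 statements merged into one kernel-verified Lean document; each statement's English description precedes it below -/
import Mathlib

section
/- Let g : (k+1)^𝒳 → ℝ≥0 be a monotone normalized k-submodular function, w : 𝒳 → ℝ≥0 a weight function, ε ∈ (0,1], τ > 0, θ ≥ 0, let 𝟎 = x⁰ ⊑ x¹ ⊑ … ⊑ xᵐ = 𝐱 be a greedy chain for g, and let v be a k-set with g(v) ≥ τ and θ·w(v) ≤ ε·τ. Suppose that for every y ∈ E(v) ∖ E(𝐱) there is a k-set s_y ⊑ 𝐱 with y ∉ E(s_y) and max_{i∈[k]} Δ_{y,i}g(s_y) ≤ θ·w(y). Then g(𝐱) ≥ (1−ε)τ/2. -/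
/-- A `k`-set: an assignment of each ground element to one of `k` parts or to none
(`none` meaning the element belongs to no part).  This encodes a tuple
`(S_1, …, S_k)` of pairwise disjoint subsets of `X`. -/
abbrev KSet (X : Type*) (k : ℕ) := X → Option (Fin k)

namespace KSet

variable {X : Type*} {k : ℕ}

/-- The empty `k`-set `𝟎 = (∅, …, ∅)`. -/
def bot (X : Type*) (k : ℕ) : KSet X k := fun _ => none

/-- `le s t` is the partial order `s ⊑ t`, i.e. `Sᵢ ⊆ Tᵢ` for every `i ∈ [k]`. -/
def le (s t : KSet X k) : Prop := ∀ (x : X) (i : Fin k), s x = some i → t x = some i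

/-- The meet `s ⊓ t`, whose `i`-th component is `Sᵢ ∩ Tᵢ`. -/
def meet (s t : KSet X k) : KSet X k := fun x => if s x = t x then s x else none

/-- The join `s ⊔ t`, whose `i`-th component is `(Sᵢ ∪ Tᵢ) \ ⋃_{j ≠ i} (Sⱼ ∪ Tⱼ)`. -/
def join (s t : KSet X k) : KSet X k := fun x =>
  match s x, t x with
  | none, b => b
  | some i, none => some i
  | some i, some j => if i = j then some i else none

/-- The `k`-set `(x, i)` whose only nonempty component is `Sᵢ = {x}`. -/
def single [DecidableEq X] (x : X) (i : Fin k) : KSet X k :=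
  fun y => if y = x then some i else none

/-- `s ⊔ (x, i)`: add the element `x` to the `i`-th part of `s`
(intended for `x ∉ E(s)`). -/
def add [DecidableEq X] (s : KSet X k) (x : X) (i : Fin k) : KSet X k :=
  Function.update s x (some i)

end KSet

/-- The marginal gain `Δ_{x,i} g (s) = g (s ⊔ (x,i)) - g s`. -/
def marg {X : Type*} [DecidableEq X] {k : ℕ} (g : KSet X k → ℝ) (s : KSet X k)
    (x : X) (i : Fin k) : ℝ :=
  g (KSet.add s x i) - g s

/-- `g` is `k`-submodular: `g (s ⊓ t) + g (s ⊔ t) ≤ g s + g t` for all `k`-sets. -/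
def KSubmodular {X : Type*} {k : ℕ} (g : KSet X k → ℝ) : Prop :=
  ∀ s t : KSet X k, g (KSet.meet s t) + g (KSet.join s t) ≤ g s + g t

/-- `g` is monotone with respect to `⊑`. -/
def KMonotone {X : Type*} {k : ℕ} (g : KSet X k → ℝ) : Prop :=
  ∀ s t : KSet X k, KSet.le s t → g s ≤ g t

/-- The weight `w(s) = ∑_{x ∈ E(s)} w x` of a `k`-set. -/
def wtot {X : Type*} [Fintype X] {k : ℕ} (w : X → ℝ) (s : KSet X k) : ℝ :=
  ∑ x ∈ Finset.univ.filter (fun x => s x ≠ none), w x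

/-- A greedy chain for `g`: `c 0 = 𝟎` and each step adds one new element at a
position maximizing the marginal gain over `i ∈ [k]`. -/
def GreedyChain {X : Type*} [DecidableEq X] {k : ℕ} (g : KSet X k → ℝ) (m : ℕ)
    (c : ℕ → KSet X k) : Prop :=
  c 0 = KSet.bot X k ∧
  ∀ p, p < m → ∃ (xp : X) (ip : Fin k),
    c p xp = none ∧
    c (p + 1) = KSet.add (c p) xp ip ∧
    ∀ i : Fin k, marg g (c p) xp i ≤ marg g (c p) xp ip

lemma KSet.le_add {X : Type*} [DecidableEq X] {k : ℕ} (s : KSet X k) (y : X)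
    (hy : s y = none) (i : Fin k) : KSet.le s (KSet.add s y i) := by
  intro z j hz
  have hzy : z ≠ y := by rintro rfl; rw [hy] at hz; cases hz
  simpa [KSet.add, Function.update_of_ne hzy] using hz

lemma g_add_mono {X : Type*} [DecidableEq X] {k : ℕ} {g : KSet X k → ℝ}
    (hmono : KMonotone g) (s : KSet X k) (y : X) (hy : s y = none) (i : Fin k) :
    g s ≤ g (KSet.add s y i) :=
  hmono _ _ (KSet.le_add s y hy i)

/-- Orthant submodularity: marginals decrease along `⊑`. -/
lemma marg_anti {X : Type*} [DecidableEq X] {k : ℕ} {g : KSet X k → ℝ}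
    (hsub : KSubmodular g) (s t : KSet X k) (hst : KSet.le s t) (y : X)
    (hty : t y = none) (i : Fin k) : marg g t y i ≤ marg g s y i := by
  have hsy : s y = none := by
    cases hs : s y with
    | none => rfl
    | some j => rw [hst y j hs] at hty; cases hty
  have h := hsub (KSet.add s y i) t
  have hm : KSet.meet (KSet.add s y i) t = s := by
    funext z
    by_cases hz : z = y
    · subst hz
      simp [KSet.meet, KSet.add, hty, hsy]
    · simp only [KSet.meet, KSet.add, Function.update_of_ne hz]
      cases hs : s z with
      | none =>
        by_cases ht : t z = none <;> simp [ht]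
      | some j => simp [hst z j hs]
  have hj : KSet.join (KSet.add s y i) t = KSet.add t y i := by
    funext z
    by_cases hz : z = y
    · subst hz
      simp [KSet.join, KSet.add, hty]
    · simp only [KSet.join, KSet.add, Function.update_of_ne hz]
      cases hs : s z with
      | none => simp
      | some j => simp [hst z j hs]
  rw [hm, hj] at h
  unfold marg
  linarith

/-- Monotone good-elements bound: for a monotone normalized
`k`-submodular `g`, weights `w ≥ 0`, `ε ∈ (0,1]`, `τ > 0`, `θ ≥ 0`, a greedy
chain ending in `𝐱 = c m`, and a `k`-set `v` with `g v ≥ τ` and `θ·w(v) ≤ ε·τ`,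
if every `y ∈ E(v) \ E(𝐱)` admits a `k`-set `s_y ⊑ 𝐱` with `y ∉ E(s_y)` and
`max_{i ∈ [k]} Δ_{y,i} g (s_y) ≤ θ·w(y)`, then `g 𝐱 ≥ (1-ε)τ/2`. -/
theorem good_elements_monotone {X : Type*} [Fintype X] [DecidableEq X] {k : ℕ}
    (g : KSet X k → ℝ) (hnn : ∀ s : KSet X k, 0 ≤ g s) (hsub : KSubmodular g)
    (hmono : KMonotone g) (hnorm : g (KSet.bot X k) = 0)
    (w : X → ℝ) (hw : ∀ x, 0 ≤ w x)
    (ε τ θ : ℝ) (hε0 : 0 < ε) (hε1 : ε ≤ 1) (hτ : 0 < τ) (hθ : 0 ≤ θ)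
    (m : ℕ) (c : ℕ → KSet X k) (hc : GreedyChain g m c)
    (v : KSet X k) (hgv : τ ≤ g v) (hwv : θ * wtot w v ≤ ε * τ)
    (hgood : ∀ y : X, v y ≠ none → c m y = none →
      ∃ s : KSet X k, KSet.le s (c m) ∧ s y = none ∧
        ∀ i : Fin k, marg g s y i ≤ θ * w y) :
    (1 - ε) * τ / 2 ≤ g (c m) := by
  classical
  obtain ⟨hc0, hcs⟩ := hc
  -- the interpolating chain `ov p`
  set ov : ℕ → KSet X k := fun p z => if c p z = none then v z else c p z with hov
  -- Claim A: along the chain, `g v ≤ g (ov p) + g (c p)`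
  have claimA : ∀ p, p ≤ m → g v ≤ g (ov p) + g (c p) := by
    intro p
    induction p with
    | zero =>
      intro _
      have h0 : ov 0 = v := by
        funext z; simp [hov, hc0, KSet.bot]
      rw [h0]
      have := hnn (c 0)
      linarith
    | succ p ih =>
      intro hpm
      have hplt : p < m := hpm
      have ihp := ih (le_of_lt hplt)
      obtain ⟨xp, ip, hnone, hadd, hmax⟩ := hcs p hplt
      have hclt : ∀ z, z ≠ xp → c (p + 1) z = c p z := by
        intro z hz; rw [hadd]; simp [KSet.add, Function.update_of_ne hz]
      have hcxp : c (p + 1) xp = some ip := by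
        rw [hadd]; simp [KSet.add]
      have key : g (ov p) - g (ov (p + 1)) ≤ g (c (p + 1)) - g (c p) := by
        cases hvxp : v xp with
        | none =>
          -- xp not in v : both sides are monotone increases
          have hov1 : ov (p + 1) = KSet.add (ov p) xp ip := by
            funext z
            by_cases hz : z = xp
            · subst hz
              simp [hov, KSet.add, hcxp]
            · simp [hov, KSet.add, Function.update_of_ne hz, hclt z hz]
          have hopxp : ov p xp = none := by simp [hov, hnone, hvxp]
          have h1 : g (ov p) ≤ g (ov (p + 1)) := by
            rw [hov1]; exact g_add_mono hmono _ _ hopxp _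
          have h2 : g (c p) ≤ g (c (p + 1)) := by
            rw [hadd]; exact g_add_mono hmono _ _ hnone _
          linarith
        | some i' =>
          set t : KSet X k := fun z => if z = xp then none else ov p z with ht
          have htxp : t xp = none := by simp [ht]
          have hovp : ov p = KSet.add t xp i' := by
            funext z
            by_cases hz : z = xp
            · subst hz
              simp [ht, hov, KSet.add, hnone, hvxp]
            · simp [ht, KSet.add, Function.update_of_ne hz, hz]
          have hov1 : ov (p + 1) = KSet.add t xp ip := by
            funext z
            by_cases hz : z = xp
            · subst hz
              simp [ht, hov, KSet.add, hcxp]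
            · simp [ht, hov, KSet.add, Function.update_of_ne hz, hz, hclt z hz]
          have hle : KSet.le (c p) t := by
            intro z j hz
            have hz' : z ≠ xp := by
              rintro rfl; rw [hnone] at hz; cases hz
            simp [ht, hz', hov, hz]
          have h1 : g t ≤ g (ov (p + 1)) := by
            rw [hov1]; exact g_add_mono hmono _ _ htxp _
          have h2 : marg g t xp i' ≤ marg g (c p) xp i' :=
            marg_anti hsub _ _ hle xp htxp i'
          have h3 : marg g (c p) xp i' ≤ marg g (c p) xp ip := hmax i'
          have h4 : g (c (p + 1)) = g (KSet.add (c p) xp ip) := by rw [hadd]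
          unfold marg at h2 h3
          rw [hovp]
          rw [h4]
          linarith
      linarith
  -- the extension of `c m` by a finite set of new elements placed at `v`'s positions
  set ext : Finset X → KSet X k := fun F z => if z ∈ F then v z else c m z with hext
  -- Claim B: extensions by good elements gain little
  have claimB : ∀ F : Finset X, (∀ z ∈ F, v z ≠ none ∧ c m z = none) →
      g (ext F) ≤ g (c m) + θ * ∑ z ∈ F, w z := by
    intro F
    induction F using Finset.induction_on with
    | empty =>
      intro _
      have : ext ∅ = c m := by funext z; simp [hext]
      rw [this]; simp
    | insert y F hyF ih =>
      intro hins
      obtain ⟨hvy, hcy⟩ := hins y (Finset.mem_insert_self y F)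
      obtain ⟨i, hi⟩ := Option.ne_none_iff_exists'.mp hvy
      have hF : ∀ z ∈ F, v z ≠ none ∧ c m z = none := fun z hz =>
        hins z (Finset.mem_insert_of_mem hz)
      have hextF : ext (insert y F) = KSet.add (ext F) y i := by
        funext z
        by_cases hz : z = y
        · subst hz
          simp [hext, hyF, KSet.add, hi]
        · simp [hext, KSet.add, Function.update_of_ne hz, hz, Finset.mem_insert]
      obtain ⟨s, hsle, hsy, hsm⟩ := hgood y hvy hcy
      have hsle' : KSet.le s (ext F) := by
        intro z j hz
        have hcz : c m z = some j := hsle z j hz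
        have hzF : z ∉ F := by
          intro hzF; rw [(hF z hzF).2] at hcz; cases hcz
        simp [hext, hzF, hcz]
      have hextFy : ext F y = none := by simp [hext, hyF, hcy]
      have hmarg : marg g (ext F) y i ≤ θ * w y :=
        le_trans (marg_anti hsub s (ext F) hsle' y hextFy i) (hsm i)
      have ihF := ih hF
      rw [hextF]
      rw [Finset.sum_insert hyF]
      unfold marg at hmarg
      have : θ * (w y + ∑ z ∈ F, w z) = θ * w y + θ * ∑ z ∈ F, w z := by ring
      rw [this]
      linarith
  -- Claim C: `ov m` is the extension of `c m` by `Y`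
  set Y : Finset X := Finset.univ.filter (fun z => v z ≠ none ∧ c m z = none) with hY
  have hYmem : ∀ z ∈ Y, v z ≠ none ∧ c m z = none := by
    intro z hz; simpa [hY] using hz
  have claimC : ov m = ext Y := by
    funext z
    simp only [hov, hext, hY, Finset.mem_filter, Finset.mem_univ, true_and]
    cases hc : c m z with
    | none =>
      cases hv : v z with
      | none => simp [hc, hv]
      | some j => simp [hc, hv]
    | some j => simp [hc]
  -- Claim D: the weight of `Y` is small
  have claimD : θ * ∑ z ∈ Y, w z ≤ ε * τ := by
    refine le_trans ?_ hwv
    refine mul_le_mul_of_nonneg_left ?_ hθ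
    apply Finset.sum_le_sum_of_subset_of_nonneg
    · intro z hz
      simp only [hY, Finset.mem_filter, Finset.mem_univ, true_and] at hz
      simp [hz.1]
    · intro z _ _; exact hw z
  have hA := claimA m le_rfl
  have hB := claimB Y hYmem
  rw [claimC] at hA
  linarith
end

section
/- (Lemma 4, non-monotone case) Let k ≥ 2, let g : (k+1)^𝒳 → ℝ≥0 be a normalized k-submodular function (not necessarily monotone), w : 𝒳 → ℝ≥0 with w(x) > 0 for all x ∈ 𝒳, ε ∈ (0,1], τ > 0 and W > 0, and let v be a k-set with g(v) ≥ τ and w(v) ≤ W. Set θ = ετ/W and A = ((4−ε)/(3ε))·W. Assume 𝒳 contains no big element, i.e., every x ∈ 𝒳 with w(x) ≤ A satisfies max_{i∈[k]} g((x,i)) < τ. Let 𝟎 = x⁰ ⊑ x¹ ⊑ … ⊑ xᵐ = 𝐱 be a greedy chain for g in which every added pair satisfies Δ_{x_p,i_p}g(xᵖ⁻¹) ≥ θ·w(x_p), and suppose that for every y ∈ E(v) ∖ E(𝐱) there is an index p_y ∈ {0,…,m} such that either max_{i∈[k]} Δ_{y,i}g(x^{p_y}) < θ·w(y), or both max_{i∈[k]}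 Δ_{y,i}g(x^{p_y}) ≥ θ·w(y) and w(x^{p_y}) + w(y) > A. Then g(𝐱) ≥ (1−ε)τ/3. -/
section Lemma4Aux

variable {X : Type*} [DecidableEq X] {k : ℕ}

private lemma add_apply_ne {s : KSet X k} {x : X} {i : Fin k} {y : X} (h : y ≠ x) :
    KSet.add s x i y = s y := Function.update_of_ne h _ _

private lemma add_apply_self {s : KSet X k} {x : X} {i : Fin k} :
    KSet.add s x i x = some i := by unfold KSet.add; simp

private lemma pair_mono {g : KSet X k → ℝ} (hsub : KSubmodular g)
    {s : KSet X k} {x : X} (hx : s x = none) {i j : Fin k} (hij : i ≠ j) :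
    0 ≤ marg g s x i + marg g s x j := by
  have h := hsub (KSet.add s x i) (KSet.add s x j)
  have hmeet : KSet.meet (KSet.add s x i) (KSet.add s x j) = s := by
    funext y
    rcases eq_or_ne y x with rfl | hy
    · simp [KSet.meet, KSet.add, hx, hij]
    · simp [KSet.meet, KSet.add, Function.update_of_ne hy]
  have hjoin : KSet.join (KSet.add s x i) (KSet.add s x j) = s := by
    funext y
    rcases eq_or_ne y x with rfl | hy
    · simp [KSet.join, KSet.add, hx, hij]
    · rw [KSet.join, add_apply_ne hy, add_apply_ne hy]
      cases s y <;> simp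
  rw [hmeet, hjoin] at h
  simp only [marg]
  linarith

private lemma orthant {g : KSet X k → ℝ} (hsub : KSubmodular g)
    {s t : KSet X k} (hst : KSet.le s t) {x : X} (ht : t x = none) (i : Fin k) :
    marg g t x i ≤ marg g s x i := by
  have hs : s x = none := by
    cases hsx : s x with
    | none => rfl
    | some a => exact absurd (hst x a hsx) (by simp [ht])
  have h := hsub (KSet.add s x i) t
  have hmeet : KSet.meet (KSet.add s x i) t = s := by
    funext y
    rcases eq_or_ne y x with rfl | hy
    · simp [KSet.meet, KSet.add, ht, hs]
    · rw [KSet.meet, add_apply_ne hy]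
      cases hsy : s y with
      | none => cases hty : t y <;> simp [hsy, hty]
      | some a => simp [hsy, hst y a hsy]
  have hjoin : KSet.join (KSet.add s x i) t = KSet.add t x i := by
    funext y
    rcases eq_or_ne y x with rfl | hy
    · rw [KSet.join, add_apply_self, ht, add_apply_self]
    · rw [KSet.join, add_apply_ne hy, add_apply_ne (i := i) (s := t) hy]
      cases hsy : s y with
      | none => cases hty : t y <;> simp [hsy, hty]
      | some a => simp [hsy, hst y a hsy]
  rw [hmeet, hjoin] at h
  simp only [marg]
  linarith

private lemma wtot_bot [Fintype X] (w : X → ℝ) : wtot w (KSet.bot X k) = 0 := by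
  simp [wtot, KSet.bot]

private lemma wtot_add [Fintype X] (w : X → ℝ) {s : KSet X k} {x : X} (hx : s x = none)
    (i : Fin k) : wtot w (KSet.add s x i) = wtot w s + w x := by
  have hfil : Finset.univ.filter (fun y => KSet.add s x i y ≠ none)
      = insert x (Finset.univ.filter (fun y => s y ≠ none)) := by
    ext y
    rcases eq_or_ne y x with rfl | hy
    · simp only [Finset.mem_filter, Finset.mem_univ, true_and]; simp [KSet.add]
    · simp only [Finset.mem_filter, Finset.mem_univ, true_and]; simp [KSet.add, Function.update_of_ne hy, hy]
  rw [wtot, hfil, Finset.sum_insert (by simp [hx]), wtot]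
  ring

end Lemma4Aux

/-- **Lemma 4, non-monotone case.** Suppose `k ≥ 2`, `g` is a
(not necessarily monotone) normalized `k`-submodular function, `w > 0`,
`ε ∈ (0,1]`, `τ > 0`, `W > 0`, `v` is a `k`-set with `g v ≥ τ` and `w(v) ≤ W`,
`θ = ετ/W`, `A = ((4-ε)/(3ε))·W`, and the ground set contains no big element.
If `𝟎 = x⁰ ⊑ … ⊑ xᵐ = 𝐱` is a greedy chain in which every added pair passes
the threshold `Δ_{x_p,i_p}g(xᵖ⁻¹) ≥ θ·w(x_p)`, and every `y ∈ E(v) \ E(𝐱)` has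
an index `p_y ≤ m` at which `y` is good or bad, then `g 𝐱 ≥ (1-ε)τ/3`. -/
theorem lemma4_nonmonotone {X : Type*} [Fintype X] [DecidableEq X] {k : ℕ} (hk : 2 ≤ k)
    (g : KSet X k → ℝ) (hnn : ∀ s : KSet X k, 0 ≤ g s) (hsub : KSubmodular g)
    (hnorm : g (KSet.bot X k) = 0)
    (w : X → ℝ) (hw : ∀ x, 0 < w x)
    (ε τ W : ℝ) (hε0 : 0 < ε) (hε1 : ε ≤ 1) (hτ : 0 < τ) (hW : 0 < W)
    (v : KSet X k) (hgv : τ ≤ g v) (hwv : wtot w v ≤ W)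
    (θ A : ℝ) (hθ : θ = ε * τ / W) (hA : A = (4 - ε) / (3 * ε) * W)
    (hnobig : ∀ x : X, w x ≤ A → ∀ i : Fin k, g (KSet.single x i) < τ)
    (m : ℕ) (c : ℕ → KSet X k) (h0 : c 0 = KSet.bot X k)
    (hchain : ∀ p, p < m → ∃ (xp : X) (ip : Fin k),
      c p xp = none ∧ c (p + 1) = KSet.add (c p) xp ip ∧
        (∀ i : Fin k, marg g (c p) xp i ≤ marg g (c p) xp ip) ∧
        θ * w xp ≤ marg g (c p) xp ip)
    (hout : ∀ y : X, v y ≠ none → c m y = none →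
      ∃ p, p ≤ m ∧
        ((∀ i : Fin k, marg g (c p) y i < θ * w y) ∨
          ((∃ i : Fin k, θ * w y ≤ marg g (c p) y i) ∧ A < wtot w (c p) + w y))) :
    (1 - ε) * τ / 3 ≤ g (c m) := by
  classical
  choose xs is hnone hsucc hmaxsel hthr using hchain
  have hθpos : 0 < θ := by rw [hθ]; positivity
  have hWne : (W : ℝ) ≠ 0 := ne_of_gt hW
  have hεne : (ε : ℝ) ≠ 0 := ne_of_gt hε0
  -- the chain is increasing
  have hle_succ : ∀ p (hp : p < m), KSet.le (c p) (c (p + 1)) := by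
    intro p hp y a hy
    have hyx : y ≠ xs p hp := by
      rintro rfl; rw [hnone p hp] at hy; cases hy
    rw [hsucc p hp, add_apply_ne hyx]; exact hy
  have hle : ∀ q, q ≤ m → ∀ p, p ≤ q → KSet.le (c p) (c q) := by
    intro q
    induction q with
    | zero => intro _ p hp; interval_cases p; exact fun x i h => h
    | succ n ih =>
      intro hq p hp
      rcases Nat.eq_or_lt_of_le hp with rfl | hlt
      · exact fun x i h => h
      · intro x i h
        exact hle_succ n (by omega) x i (ih (by omega) p (by omega) x i h)
  -- marginal gains along the chain
  have hg_succ : ∀ p (hp : p < m), g (c p) + θ * w (xs p hp) ≤ g (c (p + 1)) := by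
    intro p hp
    have h := hthr p hp
    simp only [marg] at h
    rw [← hsucc p hp] at h
    linarith
  have hg_mono : ∀ q, q ≤ m → ∀ p, p ≤ q → g (c p) ≤ g (c q) := by
    intro q
    induction q with
    | zero => intro _ p hp; interval_cases p; exact le_rfl
    | succ n ih =>
      intro hq p hp
      rcases Nat.eq_or_lt_of_le hp with rfl | hlt
      · exact le_rfl
      · have h1 := ih (by omega) p (by omega)
        have h2 := hg_succ n (by omega)
        have h3 : 0 ≤ θ * w (xs n (by omega)) :=
          le_of_lt (mul_pos hθpos (hw _))
        linarith
  have hg_wtot : ∀ p, p ≤ m → θ * wtot w (c p) ≤ g (c p) := by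
    intro p
    induction p with
    | zero => intro _; rw [h0, hnorm, wtot_bot]; simp
    | succ n ih =>
      intro hp
      have hn : n < m := by omega
      have hwt : wtot w (c (n + 1)) = wtot w (c n) + w (xs n hn) := by
        rw [hsucc n hn]; exact wtot_add w (hnone n hn) _
      rw [hwt, mul_add]
      have := hg_succ n hn
      have := ih (by omega)
      linarith
  -- weight of a single element of v's support
  have hwy_le : ∀ y : X, v y ≠ none → w y ≤ W := by
    intro y hy
    have hmem : y ∈ Finset.univ.filter (fun x => v x ≠ none) := by
      simp [hy]
    have := Finset.single_le_sum (f := w) (fun x _ => le_of_lt (hw x)) hmem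
    rw [wtot] at hwv
    linarith
  by_cases hall : ∀ y : X, v y ≠ none → c m y = none →
      ∃ p, p ≤ m ∧ ∀ i : Fin k, marg g (c p) y i < θ * w y
  · -- all missing elements are "good": hybrid argument
    set T : ℕ → KSet X k := fun p y => if c p y = none then v y else c p y with hT
    have hT0 : T 0 = v := by
      funext y; simp [hT, h0, KSet.bot]
    have hcleT : ∀ p, KSet.le (c p) (T p) := by
      intro p y a hy; simp [hT, hy]
    have hTsucc : ∀ p (hp : p < m),
        T (p + 1) = Function.update (T p) (xs p hp) (some (is p hp)) := by
      intro p hp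
      funext y
      rcases eq_or_ne y (xs p hp) with rfl | hy
      · simp [hT, hsucc p hp, add_apply_self]
      · have h1 : KSet.add (c p) (xs p hp) (is p hp) y = c p y := add_apply_ne hy
        simp [hT, hsucc p hp, h1, Function.update_of_ne hy]
    have hstep : ∀ p (hp : p < m),
        g (T p) ≤ g (T (p + 1)) + 2 * (g (c (p + 1)) - g (c p)) := by
      intro p hp
      set x := xs p hp with hx
      set i := is p hp with hi
      have hgain : marg g (c p) x i = g (c (p + 1)) - g (c p) := by
        simp only [marg]; rw [← hsucc p hp]
      have hgain_pos : 0 < marg g (c p) x i :=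
        lt_of_lt_of_le (mul_pos hθpos (hw x)) (hthr p hp)
      cases hvx : v x with
      | none =>
        -- T p x = none, T (p+1) = add (T p) x i
        have hTx : T p x = none := by simp [hT, (show c p x = none from hnone p hp), hvx]
        have hTadd : T (p + 1) = KSet.add (T p) x i := hTsucc p hp
        obtain ⟨j, hj⟩ := Fintype.exists_ne_of_one_lt_card
          (by simpa using (by omega : 1 < k)) i
        have hpm := pair_mono hsub hTx (Ne.symm hj)
        have ho := orthant hsub (hcleT p) hTx j
        have hmj := hmaxsel p hp j
        have hmargT : marg g (T p) x i = g (T (p + 1)) - g (T p) := by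
          rw [hTadd]; simp only [marg]
        linarith
      | some i' =>
        have hTx : T p x = some i' := by simp [hT, (show c p x = none from hnone p hp), hvx]
        rcases eq_or_ne i' i with rfl | hii
        · -- update with the same value
          have : T (p + 1) = T p := by
            rw [hTsucc p hp, ← hTx, Function.update_eq_self]
          rw [this]; linarith
        · -- conflict: v assigns x to i' ≠ i
          set r : KSet X k := Function.update (T p) x none with hr
          have hrx : r x = none := by simp [hr]
          have hTp_eq : T p = KSet.add r x i' := by
            rw [hr]; unfold KSet.add
            rw [Function.update_idem, ← hTx, Function.update_eq_self]
          have hTp1_eq : T (p + 1) = KSet.add r x i := by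
            rw [hTsucc p hp, hr]; unfold KSet.add
            rw [Function.update_idem]
          have hcler : KSet.le (c p) r := by
            intro y a hy
            have hyx : y ≠ x := by
              rintro rfl; rw [hnone p hp] at hy; cases hy
            rw [hr, Function.update_of_ne hyx]
            exact hcleT p y a hy
          have hpm := pair_mono hsub hrx hii
          have ho := orthant hsub hcler hrx i'
          have hmi' := hmaxsel p hp i'
          have h1 : marg g r x i' = g (T p) - g r := by
            rw [hTp_eq]; simp only [marg]
          have h2 : marg g r x i = g (T (p + 1)) - g r := by
            rw [hTp1_eq]; simp only [marg]
          linarith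
    have htel : ∀ p, p ≤ m → g v ≤ g (T p) + 2 * g (c p) := by
      intro p
      induction p with
      | zero => intro _; rw [hT0, h0, hnorm]; linarith
      | succ n ih =>
        intro hp
        have h1 := ih (by omega)
        have h2 := hstep n (by omega)
        have h3 := hg_succ n (by omega)
        linarith
    -- bound g (T m) by g (c m) + θ * W
    set D : Finset X := Finset.univ.filter (fun y => c m y = none ∧ v y ≠ none) with hD
    set U : Finset X → KSet X k := fun S y => if y ∈ S then v y else c m y with hU
    have hUD : U D = T m := by
      funext y
      by_cases hcy : c m y = none
      · by_cases hvy : v y = none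
        · simp [hU, hD, hT, hcy, hvy]
        · simp [hU, hD, hT, hcy, hvy]
      · have : y ∉ D := by simp [hD, hcy]
        simp [hU, hT, this, hcy]
    have hgood : ∀ S : Finset X, S ⊆ D → g (U S) ≤ g (c m) + θ * ∑ y ∈ S, w y := by
      intro S
      induction S using Finset.induction_on with
      | empty =>
        intro _
        have : U ∅ = c m := by funext y; simp [hU]
        rw [this]; simp
      | @insert a S ha ih =>
        intro hins
        have hsub' : S ⊆ D := fun y hy => hins (Finset.mem_insert_of_mem hy)
        have haD : a ∈ D := hins (Finset.mem_insert_self a S)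
        have hca : c m a = none := by
          have := Finset.mem_filter.mp haD; exact this.2.1
        have hva : v a ≠ none := by
          have := Finset.mem_filter.mp haD; exact this.2.2
        obtain ⟨ia, hia⟩ := Option.ne_none_iff_exists'.mp hva
        have hUSa : U S a = none := by simp [hU, ha, hca]
        have hUins : U (insert a S) = KSet.add (U S) a ia := by
          funext y
          rcases eq_or_ne y a with rfl | hy
          · rw [add_apply_self]; simp [hU, hia]
          · rw [add_apply_ne hy]; simp [hU, hy]
        have hcleU : KSet.le (c m) (U S) := by
          intro y b hy
          have hyS : y ∉ S := by
            intro hyS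
            have := (Finset.mem_filter.mp (hsub' hyS)).2.1
            rw [this] at hy; cases hy
          simp [hU, hyS, hy]
        have ho1 := orthant hsub hcleU hUSa ia
        obtain ⟨p, hpm, hp⟩ := hall a hva hca
        have ho2 := orthant hsub (hle m le_rfl p hpm) hca ia
        have hlt := hp ia
        have hmarg : marg g (U S) a ia = g (U (insert a S)) - g (U S) := by
          rw [hUins]; simp only [marg]
        have ihS := ih hsub'
        rw [Finset.sum_insert ha, mul_add]
        linarith
    have hDW : ∑ y ∈ D, w y ≤ W := by
      have hsubset : D ⊆ Finset.univ.filter (fun x => v x ≠ none) := by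
        intro y hy
        have := Finset.mem_filter.mp hy
        simp [this.2.2]
      have := Finset.sum_le_sum_of_subset_of_nonneg hsubset
        (fun x _ _ => le_of_lt (hw x))
      rw [wtot] at hwv
      linarith
    have hTm : g (T m) ≤ g (c m) + θ * W := by
      have h1 := hgood D le_rfl
      rw [hUD] at h1
      have h2 : θ * ∑ y ∈ D, w y ≤ θ * W := mul_le_mul_of_nonneg_left hDW hθpos.le
      linarith
    have hθW : θ * W = ε * τ := by rw [hθ]; field_simp
    have hfin := htel m le_rfl
    -- τ ≤ g v ≤ g (c m) + ε τ + 2 g (c m)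
    nlinarith [hnn (c m)]
  · -- some element is "bad": the chain already has large weight
    push_neg at hall
    obtain ⟨y, hvy, hcy, hbad⟩ := hall
    obtain ⟨p, hpm, hdisj⟩ := hout y hvy hcy
    rcases hdisj with hgood' | ⟨_, hAlt⟩
    · exact absurd hgood' (by
        obtain ⟨i, hi⟩ := hbad p hpm
        push_neg
        exact ⟨i, hi⟩)
    · have h1 := hg_wtot p hpm
      have h2 := hg_mono m le_rfl p hpm
      have hwyW := hwy_le y hvy
      have h3 : A - w y ≤ wtot w (c p) := by linarith
      have h4 : θ * (A - w y) ≤ θ * wtot w (c p) :=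
        mul_le_mul_of_nonneg_left h3 hθpos.le
      have h5 : θ * (A - W) ≤ θ * (A - w y) :=
        mul_le_mul_of_nonneg_left (by linarith) hθpos.le
      have h6 : θ * (A - W) = 4 * (1 - ε) * τ / 3 := by
        rw [hθ, hA]; field_simp; ring
      have h7 : 0 ≤ (1 - ε) * τ := mul_nonneg (by linarith) hτ.le
      linarith
end

section
/- (Lemma 2, non-monotone case) Let k ≥ 2, let g : (k+1)^𝒳 → ℝ≥0 be a normalized k-submodular function (not necessarily monotone), w : 𝒳 → ℝ>0 a positive weight function, τ > 0, W̄ > 0 and ε ∈ (0,1]. If the k-set 𝐬 returned by Algorithm 1 with inputs (τ, W̄, ε) contains a big element, then w(𝐬) ≤ ((4−ε)/(3ε))·W̄ and g(𝐬) ≥ τ. -/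
/-- A choice of position in `[k]` maximizing `f`. -/
noncomputable def argmaxFin {k : ℕ} [NeZero k] (f : Fin k → ℝ) : Fin k :=
  Classical.choose (Finset.exists_max_image Finset.univ f
    ⟨⟨0, Nat.pos_of_ne_zero (NeZero.ne k)⟩, Finset.mem_univ _⟩)

open Classical in
/-- One step of Algorithm 1, processing the arriving element `x` with current
solution `s`, threshold `τ`, density threshold `θ` and cost upper bound `A`:
if `x` is big (`w x ≤ A` and `max_i g((x,i)) ≥ τ`) then restart from `(x,i')`
with `i'` maximizing `g((x,i))`; otherwise add `(x,i')` with `i'` maximizing the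
marginal gain, provided `Δ_{x,i'}g(s)/w(x) ≥ θ` and `w(s) + w(x) ≤ A`. -/
noncomputable def alg1Step {X : Type*} [Fintype X] [DecidableEq X] {k : ℕ} [NeZero k]
    (g : KSet X k → ℝ) (w : X → ℝ) (τ θ A : ℝ) (s : KSet X k) (x : X) : KSet X k :=
  if w x ≤ A ∧ τ ≤ g (KSet.single x (argmaxFin fun i => g (KSet.single x i))) then
    KSet.single x (argmaxFin fun i => g (KSet.single x i))
  else if θ ≤ marg g s x (argmaxFin fun i => marg g s x i) / w x ∧ wtot w s + w x ≤ A then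
    KSet.add s x (argmaxFin fun i => marg g s x i)
  else s

/-- Algorithm 1: starting from `𝟎`, process the elements of the ground set in
their arrival order `order`. -/
noncomputable def alg1 {X : Type*} [Fintype X] [DecidableEq X] {k : ℕ} [NeZero k]
    (g : KSet X k → ℝ) (w : X → ℝ) (τ θ A : ℝ) (order : List X) : KSet X k :=
  order.foldl (alg1Step g w τ θ A) (KSet.bot X k)

/-- `x` is a big element: `w x ≤ A` and `max_{i ∈ [k]} g((x,i)) ≥ τ`. -/
def IsBig {X : Type*} [DecidableEq X] {k : ℕ} (g : KSet X k → ℝ) (w : X → ℝ)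
    (τ A : ℝ) (x : X) : Prop :=
  w x ≤ A ∧ ∃ i : Fin k, τ ≤ g (KSet.single x i)


section Aux

variable {X : Type*} [Fintype X] [DecidableEq X] {k : ℕ} [NeZero k]

lemma argmaxFin_spec' (f : Fin k → ℝ) (i : Fin k) :
    f i ≤ f (argmaxFin f) := by
  have := Classical.choose_spec (Finset.exists_max_image Finset.univ f
    ⟨⟨0, Nat.pos_of_ne_zero (NeZero.ne k)⟩, Finset.mem_univ _⟩)
  exact this.2 i (Finset.mem_univ i)

lemma wtot_single (w : X → ℝ) (x : X) (i : Fin k) :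
    wtot w (KSet.single x i) = w x := by
  unfold wtot
  have : Finset.univ.filter (fun y => KSet.single x i y ≠ none) = {x} := by
    ext y
    simp [KSet.single]
  rw [this, Finset.sum_singleton]

lemma wtot_add_le (w : X → ℝ) (hw : ∀ y, 0 ≤ w y) (s : KSet X k) (x : X) (i : Fin k) :
    wtot w (KSet.add s x i) ≤ w x + wtot w s := by
  unfold wtot
  have hsub : Finset.univ.filter (fun y => KSet.add s x i y ≠ none) ⊆
      insert x (Finset.univ.filter (fun y => s y ≠ none)) := by
    intro y hy
    simp only [Finset.mem_filter, Finset.mem_univ, true_and, KSet.add] at hy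
    by_cases hxy : y = x
    · simp [hxy]
    · have hy' := (Finset.mem_filter.mp hy).2
      rw [Function.update_of_ne hxy] at hy'
      simp [hxy, hy']
  calc ∑ y ∈ Finset.univ.filter (fun y => KSet.add s x i y ≠ none), w y
      ≤ ∑ y ∈ insert x (Finset.univ.filter (fun y => s y ≠ none)), w y :=
        Finset.sum_le_sum_of_subset_of_nonneg hsub (fun y _ _ => hw y)
    _ ≤ w x + ∑ y ∈ Finset.univ.filter (fun y => s y ≠ none), w y := by
        by_cases hx : x ∈ Finset.univ.filter (fun y => s y ≠ none)
        · rw [Finset.insert_eq_self.mpr hx]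
          exact le_add_of_nonneg_left (hw x)
        · rw [Finset.sum_insert hx]

/-- Preservation: once the solution has weight `≤ A` and value `≥ τ`,
every step of Algorithm 1 keeps it so. -/
lemma alg1Step_preserve (g : KSet X k → ℝ) (w : X → ℝ) (hw : ∀ y, 0 < w y)
    (τ θ A : ℝ) (hθ : 0 ≤ θ) (s : KSet X k) (x : X)
    (hQ : wtot w s ≤ A ∧ τ ≤ g s) :
    wtot w (alg1Step g w τ θ A s x) ≤ A ∧ τ ≤ g (alg1Step g w τ θ A s x) := by
  unfold alg1Step
  split_ifs with h1 h2
  · exact ⟨by rw [wtot_single]; exact h1.1, h1.2⟩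
  · constructor
    · calc wtot w (KSet.add s x _) ≤ w x + wtot w s :=
            wtot_add_le w (fun y => (hw y).le) s x _
        _ ≤ A := by linarith [h2.2]
    · have hm : θ * w x ≤ marg g s x (argmaxFin fun i => marg g s x i) :=
        (le_div_iff₀ (hw x)).mp h2.1
      have h3 : 0 ≤ marg g s x (argmaxFin fun i => marg g s x i) :=
        le_trans (mul_nonneg hθ (hw x).le) hm
      have h4 : marg g s x (argmaxFin fun i => marg g s x i) =
          g (KSet.add s x (argmaxFin fun i => marg g s x i)) - g s := rfl
      linarith [hQ.2]
  · exact hQ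

/-- When a big element arrives, the step produces a solution of weight `≤ A`
and value `≥ τ`. -/
lemma alg1Step_big (g : KSet X k → ℝ) (w : X → ℝ)
    (τ θ A : ℝ) (s : KSet X k) (x : X) (hx : IsBig g w τ A x) :
    wtot w (alg1Step g w τ θ A s x) ≤ A ∧ τ ≤ g (alg1Step g w τ θ A s x) := by
  obtain ⟨hwx, i, hi⟩ := hx
  have hcond : w x ≤ A ∧ τ ≤ g (KSet.single x (argmaxFin fun i => g (KSet.single x i))) :=
    ⟨hwx, le_trans hi (argmaxFin_spec' (fun i => g (KSet.single x i)) i)⟩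
  unfold alg1Step
  rw [if_pos hcond]
  exact ⟨by rw [wtot_single]; exact hwx, hcond.2⟩

lemma alg1_main (g : KSet X k → ℝ) (w : X → ℝ) (hw : ∀ y, 0 < w y)
    (τ θ A : ℝ) (hθ : 0 ≤ θ) :
    ∀ (l : List X) (s₀ : KSet X k),
      ((wtot w s₀ ≤ A ∧ τ ≤ g s₀) ∨
        ∃ x, x ∈ l ∧ IsBig g w τ A x ∧ l.foldl (alg1Step g w τ θ A) s₀ x ≠ none) →
      wtot w (l.foldl (alg1Step g w τ θ A) s₀) ≤ A ∧
        τ ≤ g (l.foldl (alg1Step g w τ θ A) s₀) := by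
  intro l
  induction l with
  | nil =>
    intro s₀ h
    rcases h with h | ⟨x, hx, _⟩
    · exact h
    · exact absurd hx List.not_mem_nil
  | cons a t ih =>
    intro s₀ h
    rw [List.foldl_cons] at *
    rcases h with h | ⟨x, hx, hbig, hne⟩
    · exact ih _ (Or.inl (alg1Step_preserve g w hw τ θ A hθ s₀ a h))
    · rcases List.mem_cons.mp hx with rfl | hxt
      · exact ih _ (Or.inl (alg1Step_big g w τ θ A s₀ x hbig))
      · exact ih _ (Or.inr ⟨x, hxt, hbig, hne⟩)

end Aux

/-- **Lemma 2, non-monotone case.** For `k ≥ 2` and `g` not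
necessarily monotone (so `A = ((4-ε)/(3ε))·W̄`): if the output of Algorithm 1
contains a big element, then `w(𝐬) ≤ ((4-ε)/(3ε))·W̄` and `g 𝐬 ≥ τ`. -/
theorem lemma2_nonmonotone {X : Type*} [Fintype X] [DecidableEq X] {k : ℕ} [NeZero k]
    (hk : 2 ≤ k)
    (g : KSet X k → ℝ) (hnn : ∀ s : KSet X k, 0 ≤ g s) (hsub : KSubmodular g)
    (hnorm : g (KSet.bot X k) = 0)
    (w : X → ℝ) (hw : ∀ x, 0 < w x)
    (τ Wbar ε : ℝ) (hτ : 0 < τ) (hW : 0 < Wbar) (hε0 : 0 < ε) (hε1 : ε ≤ 1)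
    (order : List X) (hnodup : order.Nodup) (hfull : ∀ x : X, x ∈ order)
    (hbig : ∃ x : X,
      alg1 g w τ (ε * τ / Wbar) ((4 - ε) / (3 * ε) * Wbar) order x ≠ none ∧
      IsBig g w τ ((4 - ε) / (3 * ε) * Wbar) x) :
    wtot w (alg1 g w τ (ε * τ / Wbar) ((4 - ε) / (3 * ε) * Wbar) order) ≤
        (4 - ε) / (3 * ε) * Wbar ∧
      τ ≤ g (alg1 g w τ (ε * τ / Wbar) ((4 - ε) / (3 * ε) * Wbar) order)  := by
  obtain ⟨x, hne, hbx⟩ := hbig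
  have hθ : (0:ℝ) ≤ ε * τ / Wbar := by positivity
  exact alg1_main g w hw τ (ε * τ / Wbar) ((4 - ε) / (3 * ε) * Wbar) hθ order
    (KSet.bot X k) (Or.inr ⟨x, hfull x, hbx, hne⟩)
end
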